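/- G(z) = 1 - (e^{-z} - e^{-2z})/z has no zeros z with Re(z) ≥ 0 except z = 0. -/
import Mathlib

open Complex

/-- `G(z) = 1 - (e^{-z} - e^{-2z})/z` for `z ≠ 0`, with `G(0) = 0`. -/
noncomputable def G (z : ℂ) : ℂ :=
  if z = 0 then 0 else 1 - (Complex.exp (-z) - Complex.exp (-2 * z)) / z

lemma re_int_lt_one (z : ℂ) (hz : z ≠ 0) (hre : 0 ≤ z.re) :
    (∫ t in (1:ℝ)..2, Real.exp (-(z.re * t)) * Real.cos (z.im * t)) < 1 := by
  have hc : ContinuousOn (fun t : ℝ => Real.exp (-(z.re * t)) * Real.cos (z.im * t))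
      (Set.Icc 1 2) := by fun_prop
  have h1 : ContinuousOn (fun _ : ℝ => (1:ℝ)) (Set.Icc 1 2) := continuousOn_const
  have hle : ∀ t ∈ Set.Ioc (1:ℝ) 2,
      Real.exp (-(z.re * t)) * Real.cos (z.im * t) ≤ 1 := by
    intro t ht
    have h1 : Real.exp (-(z.re * t)) ≤ 1 := by
      rw [Real.exp_le_one_iff]
      nlinarith [ht.1]
    nlinarith [Real.cos_le_one (z.im * t), Real.neg_one_le_cos (z.im * t),
      Real.exp_pos (-(z.re * t))]
  have hlt : ∃ c ∈ Set.Icc (1:ℝ) 2,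
      Real.exp (-(z.re * c)) * Real.cos (z.im * c) < 1 := by
    rcases lt_or_eq_of_le hre with hx | hx
    · refine ⟨1, by norm_num, ?_⟩
      have h1 : Real.exp (-(z.re * 1)) < 1 := by
        rw [Real.exp_lt_one_iff]; linarith
      nlinarith [Real.cos_le_one (z.im * 1), Real.neg_one_le_cos (z.im * 1),
        Real.exp_pos (-(z.re * 1))]
    · have hy : z.im ≠ 0 := by
        intro hy
        exact hz (Complex.ext (by simp [← hx]) (by simp [hy]))
      rw [← hx]
      simp only [zero_mul, neg_zero, Real.exp_zero, one_mul]
      by_cases h54 : Real.cos (z.im * (5/4)) < 1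
      · exact ⟨5/4, by norm_num, h54⟩
      · have h54' : Real.cos (z.im * (5/4)) = 1 :=
          le_antisymm (Real.cos_le_one _) (not_lt.1 h54)
        obtain ⟨n, hn⟩ := (Real.cos_eq_one_iff _).1 h54'
        have hsq := Real.sq_sqrt (show (0:ℝ) ≤ 2 by norm_num)
        have hsn := Real.sqrt_nonneg 2
        have hlb : (1:ℝ) ≤ Real.sqrt 2 := by nlinarith
        have hub : Real.sqrt 2 ≤ 2 := by nlinarith
        refine ⟨Real.sqrt 2, ⟨hlb, hub⟩, ?_⟩
        rcases lt_or_eq_of_le (Real.cos_le_one (z.im * Real.sqrt 2)) with h | h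
        · exact h
        obtain ⟨m, hm⟩ := (Real.cos_eq_one_iff _).1 h
        exfalso
        have hn0 : (n : ℝ) ≠ 0 := by
          intro h0
          rw [h0, zero_mul] at hn
          have := mul_ne_zero hy (by norm_num : (5/4:ℝ) ≠ 0)
          exact this hn.symm
        have key : z.im * (Real.sqrt 2 * n) = z.im * ((5/4) * m) := by
          calc z.im * (Real.sqrt 2 * n) = (z.im * Real.sqrt 2) * n := by ring
            _ = ((m : ℝ) * (2 * Real.pi)) * n := by rw [hm]
            _ = ((n : ℝ) * (2 * Real.pi)) * m := by ring
            _ = (z.im * (5/4)) * m := by rw [hn]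
            _ = z.im * ((5/4) * m) := by ring
        have key2 : Real.sqrt 2 * n = (5/4 : ℝ) * m := mul_left_cancel₀ hy key
        have hs : Real.sqrt 2 = (5 * m : ℝ) / (4 * n) := by
          field_simp
          linear_combination 4 * key2
        exact irrational_sqrt_two ⟨(5 * m) / (4 * n), by push_cast [hs]; ring⟩
  calc (∫ t in (1:ℝ)..2, Real.exp (-(z.re * t)) * Real.cos (z.im * t))
      < ∫ _ in (1:ℝ)..2, (1:ℝ) :=
        intervalIntegral.integral_lt_integral_of_continuousOn_of_le_of_exists_lt
          (by norm_num) hc h1 hle hlt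
    _ = 1 := by norm_num

/-- `G` has no zeros with `Re z ≥ 0` except `z = 0`. -/
theorem no_zeros_right (z : ℂ) (hG : G z = 0) (hre : 0 ≤ z.re) : z = 0 := by
  by_contra hz
  have hQ : (Complex.exp (-z) - Complex.exp (-2 * z)) / z = 1 := by
    rw [G, if_neg hz] at hG
    linear_combination -hG
  have hint : (∫ t in (1:ℝ)..2, Complex.exp (-z * t))
      = (Complex.exp (-z) - Complex.exp (-2 * z)) / z := by
    rw [integral_exp_mul_complex (neg_ne_zero.2 hz)]
    have h2 : -z * (2:ℝ) = -2 * z := by push_cast; ring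
    have h1 : -z * (1:ℝ) = -z := by push_cast; ring
    rw [h2, h1, div_neg, ← neg_div, neg_sub]
  have hcont : IntervalIntegrable (fun t : ℝ => Complex.exp (-z * t))
      MeasureTheory.volume 1 2 := (Continuous.intervalIntegrable (by fun_prop) _ _)
  have hre_int : ((∫ t in (1:ℝ)..2, Complex.exp (-z * t))).re
      = ∫ t in (1:ℝ)..2, Real.exp (-(z.re * t)) * Real.cos (z.im * t) := by
    rw [show ((∫ t in (1:ℝ)..2, Complex.exp (-z * t))).re
        = Complex.reCLM (∫ t in (1:ℝ)..2, Complex.exp (-z * t)) from rfl,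
      ← Complex.reCLM.intervalIntegral_comp_comm hcont]
    apply intervalIntegral.integral_congr
    intro t ht
    simp only [Complex.reCLM_apply, Complex.exp_re, Complex.neg_re, Complex.neg_im,
      Complex.mul_re, Complex.mul_im, Complex.ofReal_re, Complex.ofReal_im]
    ring_nf
    rw [Real.cos_neg, mul_comm t z.im]
  have := re_int_lt_one z hz hre
  rw [← hre_int, hint, hQ] at this
  simp at this
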